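/- Let N ≥ 2, let A be an irreducible N×N real matrix satisfying Condition A1 with normalized positive left eigenvector ξ, let Ξ = diag(ξ_1,…,ξ_N) and U = Ξ − ξξ^T, let Δ = diag(δ_1,…,δ_n) be any diagonal matrix, and let Γ = diag(γ_1,…,γ_n) with all γ_j > 0. Then there exists c > 0 such that for every j ∈ {1,…,n} and every vector v ∈ ℝ^N, δ_j v^T U v + c γ_j v^T ((Ξ A + A^T Ξ)/2) v ≤ 0. -/

import Mathlib

open Matrix

/-- For an irreducible A ∈ A1 (N ≥ 2) with normalized positive left
0-eigenvector ξ, U = Ξ − ξξᵀ, any diagonal Δ = diag(δ₁,…,δₙ) and positive diagonal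
Γ = diag(γ₁,…,γₙ), there exists c > 0 such that for every j and every v ∈ ℝ^N,
δⱼ vᵀUv + c γⱼ vᵀ((ΞA + AᵀΞ)/2)v ≤ 0. -/
theorem stmt6 (N n : ℕ) (hN : 2 ≤ N) (A : Matrix (Fin N) (Fin N) ℝ)
    (hoff : ∀ i j, i ≠ j → 0 ≤ A i j)
    (hdiag : ∀ i, A i i = -∑ j ∈ Finset.univ.erase i, A i j)
    (hirr : ∀ S : Finset (Fin N), S.Nonempty → S ≠ Finset.univ →
      ∃ i ∈ S, ∃ j, j ∉ S ∧ A i j ≠ 0)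
    (ξ : Fin N → ℝ) (hξpos : ∀ i, 0 < ξ i) (hξsum : ∑ i, ξ i = 1)
    (hξeig : Matrix.vecMul ξ A = 0)
    (δ : Fin n → ℝ) (γ : Fin n → ℝ) (hγ : ∀ k, 0 < γ k) :
    ∃ c : ℝ, 0 < c ∧ ∀ j : Fin n, ∀ v : Fin N → ℝ,
      δ j * (v ⬝ᵥ (Matrix.of fun i i' =>
          (if i = i' then ξ i else 0) - ξ i * ξ i').mulVec v)
        + c * γ j * (v ⬝ᵥ (Matrix.of fun i i' =>
            (ξ i * A i i' + A i' i * ξ i') / 2).mulVec v) ≤ 0 := by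
  classical
  -- row sums of A vanish
  have rowsum : ∀ i, ∑ j, A i j = 0 := by
    intro i
    rw [← Finset.add_sum_erase _ _ (Finset.mem_univ i), hdiag i]
    ring
  -- column sums weighted by ξ vanish
  have colsum : ∀ j, ∑ i, ξ i * A i j = 0 := by
    intro j
    have := congrFun hξeig j
    simpa [Matrix.vecMul, dotProduct] using this
  -- the two quadratic forms as sums of squared differences
  set G : (Fin N → ℝ) → ℝ :=
    fun v => ∑ i, ∑ i', ξ i * ξ i' * (v i - v i') ^ 2 with hGdef
  set E : (Fin N → ℝ) → ℝ :=
    fun v => ∑ i, ∑ i', ξ i * A i i' * (v i - v i') ^ 2 with hEdef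
  -- identity for U
  have hU : ∀ v : Fin N → ℝ,
      v ⬝ᵥ (Matrix.of fun i i' =>
        (if i = i' then ξ i else 0) - ξ i * ξ i').mulVec v = G v / 2 := by
    intro v
    have hlhs : v ⬝ᵥ (Matrix.of fun i i' =>
        (if i = i' then ξ i else 0) - ξ i * ξ i').mulVec v
        = (∑ i, ξ i * v i ^ 2) - (∑ i, ξ i * v i) ^ 2 := by
      simp only [dotProduct, mulVec, Matrix.of_apply]
      have : ∀ i, (v i * ∑ i', (((if i = i' then ξ i else 0) - ξ i * ξ i') * v i'))
          = ξ i * v i ^ 2 - (ξ i * v i) * (∑ i', ξ i' * v i') := by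
        intro i
        have h1 : ∑ i', (((if i = i' then ξ i else 0) - ξ i * ξ i') * v i')
            = ξ i * v i - ξ i * (∑ i', ξ i' * v i') := by
          have e : ∀ i', ((if i = i' then ξ i else 0) - ξ i * ξ i') * v i'
              = (if i = i' then ξ i * v i' else 0) - ξ i * (ξ i' * v i') := by
            intro i'; split <;> ring
          rw [Finset.sum_congr rfl fun i' _ => e i', Finset.sum_sub_distrib,
            Finset.sum_ite_eq, ← Finset.mul_sum]
          simp
        rw [h1]; ring
      calc ∑ i, v i * ∑ i', (((if i = i' then ξ i else 0) - ξ i * ξ i') * v i')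
          = ∑ i, (ξ i * v i ^ 2 - (ξ i * v i) * (∑ i', ξ i' * v i')) :=
            Finset.sum_congr rfl fun i _ => this i
        _ = (∑ i, ξ i * v i ^ 2) - (∑ i, ξ i * v i) * (∑ i', ξ i' * v i') := by
            rw [Finset.sum_sub_distrib, Finset.sum_mul]
        _ = (∑ i, ξ i * v i ^ 2) - (∑ i, ξ i * v i) ^ 2 := by ring
    have hrhs : G v = 2 * (∑ i, ξ i * v i ^ 2) - 2 * (∑ i, ξ i * v i) ^ 2 := by
      have expand : G v = ∑ i, ∑ i', ((ξ i * v i ^ 2) * ξ i'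
          - 2 * ((ξ i * v i) * (ξ i' * v i')) + ξ i * (ξ i' * v i' ^ 2)) := by
        exact Finset.sum_congr rfl fun i _ => Finset.sum_congr rfl fun i' _ => by ring
      have s1 : ∑ i, ∑ i', (ξ i * v i ^ 2) * ξ i'
          = (∑ i, ξ i * v i ^ 2) * (∑ i', ξ i') := by
        rw [Finset.sum_mul_sum]
      have s2 : ∑ i, ∑ i', (ξ i * v i) * (ξ i' * v i')
          = (∑ i, ξ i * v i) * (∑ i', ξ i' * v i') := by
        rw [Finset.sum_mul_sum]
      have s3 : ∑ i, ∑ i', ξ i * (ξ i' * v i' ^ 2)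
          = (∑ i, ξ i) * (∑ i', ξ i' * v i' ^ 2) := by
        rw [Finset.sum_mul_sum]
      calc G v = ∑ i, ((∑ i', (ξ i * v i ^ 2) * ξ i')
            - 2 * (∑ i', (ξ i * v i) * (ξ i' * v i')) + (∑ i', ξ i * (ξ i' * v i' ^ 2))) := by
            rw [expand]
            exact Finset.sum_congr rfl fun i _ => by
              rw [Finset.sum_add_distrib, Finset.sum_sub_distrib, Finset.mul_sum]
        _ = (∑ i, ∑ i', (ξ i * v i ^ 2) * ξ i')
            - 2 * (∑ i, ∑ i', (ξ i * v i) * (ξ i' * v i'))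
            + (∑ i, ∑ i', ξ i * (ξ i' * v i' ^ 2)) := by
            rw [Finset.sum_add_distrib, Finset.sum_sub_distrib, ← Finset.mul_sum]
        _ = 2 * (∑ i, ξ i * v i ^ 2) - 2 * (∑ i, ξ i * v i) ^ 2 := by
            rw [s1, s2, s3, hξsum]; ring
    rw [hlhs, hrhs]; ring
  -- identity for the symmetrized generator
  have hB : ∀ v : Fin N → ℝ,
      v ⬝ᵥ (Matrix.of fun i i' =>
        (ξ i * A i i' + A i' i * ξ i') / 2).mulVec v = -(E v) / 2 := by
    intro v
    have hQ : v ⬝ᵥ (Matrix.of fun i i' =>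
        (ξ i * A i i' + A i' i * ξ i') / 2).mulVec v
        = ∑ i, ∑ i', ξ i * A i i' * (v i * v i') := by
      simp only [dotProduct, mulVec, Matrix.of_apply]
      have expand : ∑ i, v i * (∑ i', ((ξ i * A i i' + A i' i * ξ i') / 2 * v i'))
          = ∑ i, ∑ i', ((ξ i * A i i' * (v i * v i')) / 2
              + (ξ i' * A i' i * (v i * v i')) / 2) := by
        rw [Finset.sum_congr rfl fun i _ => Finset.mul_sum _ _ _]
        exact Finset.sum_congr rfl fun i _ => Finset.sum_congr rfl fun i' _ => by ring
      rw [expand]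
      have split : ∑ i, ∑ i', ((ξ i * A i i' * (v i * v i')) / 2
            + (ξ i' * A i' i * (v i * v i')) / 2)
          = (∑ i, ∑ i', ξ i * A i i' * (v i * v i')) / 2
            + (∑ i, ∑ i', ξ i' * A i' i * (v i * v i')) / 2 := by
        rw [Finset.sum_congr rfl fun i _ => Finset.sum_add_distrib,
          Finset.sum_add_distrib, Finset.sum_div, Finset.sum_div]
        congr 1 <;> exact Finset.sum_congr rfl fun i _ => (Finset.sum_div _ _ _).symm
      rw [split]
      have swap : ∑ i, ∑ i', ξ i' * A i' i * (v i * v i')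
          = ∑ i, ∑ i', ξ i * A i i' * (v i * v i') := by
        rw [Finset.sum_comm]
        exact Finset.sum_congr rfl fun i _ => Finset.sum_congr rfl fun i' _ => by ring
      rw [swap]; ring
    have hE2 : E v = - 2 * ∑ i, ∑ i', ξ i * A i i' * (v i * v i') := by
      have expand : E v = ∑ i, ∑ i', ((ξ i * v i ^ 2) * A i i'
          + (ξ i * A i i') * v i' ^ 2 - 2 * (ξ i * A i i' * (v i * v i'))) := by
        exact Finset.sum_congr rfl fun i _ => Finset.sum_congr rfl fun i' _ => by ring
      have t1 : ∑ i, ∑ i', (ξ i * v i ^ 2) * A i i' = 0 := by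
        apply Finset.sum_eq_zero
        intro i _
        rw [← Finset.mul_sum, rowsum i, mul_zero]
      have t2 : ∑ i, ∑ i', (ξ i * A i i') * v i' ^ 2 = 0 := by
        rw [Finset.sum_comm]
        apply Finset.sum_eq_zero
        intro i' _
        have : ∑ i, (ξ i * A i i') * v i' ^ 2 = (∑ i, ξ i * A i i') * v i' ^ 2 := by
          rw [Finset.sum_mul]
        rw [this, colsum i', zero_mul]
      have t3 : ∑ i, ∑ i', 2 * (ξ i * A i i' * (v i * v i'))
          = 2 * ∑ i, ∑ i', ξ i * A i i' * (v i * v i') := by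
        simp only [Finset.mul_sum]
      calc E v = (∑ i, ∑ i', (ξ i * v i ^ 2) * A i i')
            + (∑ i, ∑ i', (ξ i * A i i') * v i' ^ 2)
            - (∑ i, ∑ i', 2 * (ξ i * A i i' * (v i * v i'))) := by
            rw [expand]
            simp only [Finset.sum_sub_distrib, Finset.sum_add_distrib]
        _ = - 2 * ∑ i, ∑ i', ξ i * A i i' * (v i * v i') := by
            rw [t1, t2, t3]; ring
    rw [hQ]
    rw [hE2] at *
    ring
  -- nonnegativity
  have hGnn : ∀ v, 0 ≤ G v := by
    intro v
    apply Finset.sum_nonneg; intro i _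
    apply Finset.sum_nonneg; intro i' _
    have := (hξpos i).le
    have := (hξpos i').le
    positivity
  have hEnn : ∀ v, 0 ≤ E v := by
    intro v
    apply Finset.sum_nonneg; intro i _
    apply Finset.sum_nonneg; intro i' _
    rcases eq_or_ne i i' with h | h
    · subst h; simp
    · have h1 : 0 ≤ ξ i * A i i' := mul_nonneg (hξpos i).le (hoff i i' h)
      positivity
  -- homogeneity
  have hGsmul : ∀ (t : ℝ) (w : Fin N → ℝ), G (t • w) = t ^ 2 * G w := by
    intro t w
    simp only [hGdef, Finset.mul_sum]
    exact Finset.sum_congr rfl fun i _ => Finset.sum_congr rfl fun i' _ => by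
      simp only [Pi.smul_apply, smul_eq_mul]; ring
  have hEsmul : ∀ (t : ℝ) (w : Fin N → ℝ), E (t • w) = t ^ 2 * E w := by
    intro t w
    simp only [hEdef, Finset.mul_sum]
    exact Finset.sum_congr rfl fun i _ => Finset.sum_congr rfl fun i' _ => by
      simp only [Pi.smul_apply, smul_eq_mul]; ring
  -- special indices
  have hN0 : 0 < N := by omega
  let i₀ : Fin N := ⟨0, by omega⟩
  let i₁ : Fin N := ⟨1, by omega⟩
  have hi01 : i₀ ≠ i₁ := by simp [i₀, i₁, Fin.ext_iff]
  -- shift invariance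
  have hGshift : ∀ v : Fin N → ℝ, G (fun i => v i - v i₀) = G v := by
    intro v
    exact Finset.sum_congr rfl fun i _ => Finset.sum_congr rfl fun i' _ => by ring_nf
  have hEshift : ∀ v : Fin N → ℝ, E (fun i => v i - v i₀) = E v := by
    intro v
    exact Finset.sum_congr rfl fun i _ => Finset.sum_congr rfl fun i' _ => by ring_nf
  -- the compact set
  set S : Set (Fin N → ℝ) := {w | w i₀ = 0 ∧ ‖w‖ = 1} with hSdef
  have hSclosed : IsClosed S := by
    have : S = {w : Fin N → ℝ | w i₀ = 0} ∩ {w : Fin N → ℝ | ‖w‖ = 1} := by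
      ext w; simp [hSdef, Set.mem_setOf_eq]
    rw [this]
    exact (isClosed_eq (continuous_apply i₀) continuous_const).inter
      (isClosed_eq continuous_norm continuous_const)
  have hScompact : IsCompact S := by
    apply IsCompact.of_isClosed_subset (isCompact_closedBall (0 : Fin N → ℝ) 1) hSclosed
    intro w hw
    simp only [Metric.mem_closedBall, dist_zero_right]
    exact le_of_eq hw.2
  have hSne : S.Nonempty := by
    refine ⟨Pi.single i₁ (1 : ℝ), ?_, ?_⟩
    · exact Pi.single_eq_of_ne hi01 1
    · rw [Pi.norm_single]; simp
  -- continuity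
  have hGcont : Continuous G := by
    apply continuous_finset_sum; intro i _
    apply continuous_finset_sum; intro i' _
    exact continuous_const.mul (((continuous_apply i).sub (continuous_apply i')).pow 2)
  have hEcont : Continuous E := by
    apply continuous_finset_sum; intro i _
    apply continuous_finset_sum; intro i' _
    exact continuous_const.mul (((continuous_apply i).sub (continuous_apply i')).pow 2)
  -- E is strictly positive on S
  have hEposS : ∀ u ∈ S, 0 < E u := by
    rintro u ⟨hu0, hu1⟩
    rcases lt_or_eq_of_le (hEnn u) with h | h
    · exact h
    exfalso
    have hE0 : E u = 0 := h.symm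
    -- every term vanishes
    have termnn : ∀ i i' : Fin N, 0 ≤ ξ i * A i i' * (u i - u i') ^ 2 := by
      intro i i'
      rcases eq_or_ne i i' with hii | hii
      · subst hii; simp
      · have h1 : 0 ≤ ξ i * A i i' := mul_nonneg (hξpos i).le (hoff i i' hii)
        positivity
    have hinner : ∀ i ∈ Finset.univ, (∑ i', ξ i * A i i' * (u i - u i') ^ 2) = 0 :=
      (Finset.sum_eq_zero_iff_of_nonneg
        (fun i _ => Finset.sum_nonneg fun i' _ => termnn i i')).mp hE0
    have hterm : ∀ i i' : Fin N, ξ i * A i i' * (u i - u i') ^ 2 = 0 := by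
      intro i i'
      exact (Finset.sum_eq_zero_iff_of_nonneg (fun i' _ => termnn i i')).mp
        (hinner i (Finset.mem_univ i)) i' (Finset.mem_univ i')
    -- the zero set of u
    set T : Finset (Fin N) := Finset.univ.filter (fun i => u i = 0) with hTdef
    have hTne : T.Nonempty := ⟨i₀, by simp [hTdef, hu0]⟩
    have hTuniv : T ≠ Finset.univ := by
      intro hT
      have : u = 0 := by
        funext i
        have : i ∈ T := hT ▸ Finset.mem_univ i
        simpa [hTdef] using this
      rw [this] at hu1
      simp at hu1
    obtain ⟨i, hiT, j, hjT, hAij⟩ := hirr T hTne hTuniv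
    have hui : u i = 0 := by simpa [hTdef] using hiT
    have huj : u j ≠ 0 := by
      intro h
      exact hjT (by simp [hTdef, h])
    have := hterm i j
    have hξA : ξ i * A i j ≠ 0 := mul_ne_zero (hξpos i).ne' hAij
    have : (u i - u j) ^ 2 = 0 := by
      rcases mul_eq_zero.mp this with h | h
      · exact absurd h hξA
      · exact h
    have : u i = u j := by
      have := pow_eq_zero_iff (n := 2) (by norm_num) |>.mp this
      linarith [sub_eq_zero.mp this]
    exact huj (by rw [← this, hui])
  -- min of E and max of G on S
  obtain ⟨u₀, hu₀S, hu₀min⟩ := hScompact.exists_isMinOn hSne hEcont.continuousOn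
  obtain ⟨u₁, hu₁S, hu₁max⟩ := hScompact.exists_isMaxOn hSne hGcont.continuousOn
  set m : ℝ := E u₀ with hmdef
  set M : ℝ := G u₁ with hMdef
  have hm : 0 < m := hEposS u₀ hu₀S
  have hM : 0 ≤ M := hGnn u₁
  set K : ℝ := M / m with hKdef
  have hK : 0 ≤ K := div_nonneg hM hm.le
  -- comparison on S
  have hcompS : ∀ u ∈ S, G u ≤ K * E u := by
    intro u huS
    have h1 : G u ≤ M := hu₁max huS
    have h2 : m ≤ E u := hu₀min huS
    calc G u ≤ M := h1
      _ = K * m := by rw [hKdef, div_mul_cancel₀ M hm.ne']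
      _ ≤ K * E u := mul_le_mul_of_nonneg_left h2 hK
  -- comparison everywhere
  have hcomp : ∀ v : Fin N → ℝ, G v ≤ K * E v := by
    intro v
    set w : Fin N → ℝ := fun i => v i - v i₀ with hwdef
    have hw0 : w i₀ = 0 := by simp [hwdef]
    by_cases hw : w = 0
    · have hGv : G v = 0 := by
        rw [← hGshift v, ← hwdef, hw]
        simp [hGdef]
      rw [hGv]
      exact mul_nonneg hK (hEnn v)
    · have hwn : 0 < ‖w‖ := norm_pos_iff.mpr hw
      set u : Fin N → ℝ := ‖w‖⁻¹ • w with hudef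
      have huS : u ∈ S := by
        constructor
        · simp [hudef, hw0]
        · rw [hudef, norm_smul]
          simp [abs_of_pos (inv_pos.mpr hwn), inv_mul_cancel₀ hwn.ne']
      have hwu : w = ‖w‖ • u := by
        rw [hudef, smul_smul, mul_inv_cancel₀ hwn.ne', one_smul]
      calc G v = G w := (hGshift v).symm
        _ = G (‖w‖ • u) := by rw [← hwu]
        _ = ‖w‖ ^ 2 * G u := hGsmul _ _
        _ ≤ ‖w‖ ^ 2 * (K * E u) := by
            apply mul_le_mul_of_nonneg_left (hcompS u huS)
            positivity
        _ = K * (‖w‖ ^ 2 * E u) := by ring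
        _ = K * E (‖w‖ • u) := by rw [hEsmul ‖w‖ u]
        _ = K * E w := by rw [← hwu]
        _ = K * E v := by rw [hEshift]
  -- choose c
  refine ⟨1 + ∑ j : Fin n, max (K * δ j / γ j) 0, ?_, ?_⟩
  · have : 0 ≤ ∑ j : Fin n, max (K * δ j / γ j) 0 :=
      Finset.sum_nonneg fun j _ => le_max_right _ _
    linarith
  · intro j v
    set c : ℝ := 1 + ∑ j : Fin n, max (K * δ j / γ j) 0 with hcdef
    have hcge : K * δ j / γ j ≤ c := by
      have h1 : max (K * δ j / γ j) 0 ≤ ∑ k : Fin n, max (K * δ k / γ k) 0 :=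
        Finset.single_le_sum (f := fun k => max (K * δ k / γ k) 0)
          (fun k _ => le_max_right _ _) (Finset.mem_univ j)
      have h2 : K * δ j / γ j ≤ max (K * δ j / γ j) 0 := le_max_left _ _
      linarith
    rw [hU v, hB v]
    have key : δ j * G v ≤ c * γ j * E v := by
      rcases le_or_gt (δ j) 0 with hd | hd
      · have h1 : δ j * G v ≤ 0 := mul_nonpos_of_nonpos_of_nonneg hd (hGnn v)
        have hc0 : 0 < c := by
          have : 0 ≤ ∑ k : Fin n, max (K * δ k / γ k) 0 :=
            Finset.sum_nonneg fun k _ => le_max_right _ _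
          rw [hcdef]; linarith
        have h2 : 0 ≤ c * γ j * E v := by
          apply mul_nonneg (mul_nonneg hc0.le (hγ j).le) (hEnn v)
        linarith
      · have h1 : δ j * G v ≤ δ j * (K * E v) :=
          mul_le_mul_of_nonneg_left (hcomp v) hd.le
        have h2 : δ j * K ≤ c * γ j := by
          rw [div_le_iff₀ (hγ j)] at hcge
          linarith [hcge]
        have h3 : δ j * (K * E v) = (δ j * K) * E v := by ring
        have h4 : (δ j * K) * E v ≤ (c * γ j) * E v :=
          mul_le_mul_of_nonneg_right h2 (hEnn v)
        linarith
    clear_value c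
    have hfin : δ j * (G v / 2) + c * γ j * (-E v / 2)
        = (δ j * G v - c * γ j * E v) / 2 := by ring
    rw [hfin]
    linarith [key]
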